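/- Let A ∈ Matrix (Fin 2) (Fin 2) ℂ with trace A = 0 and det A ≠ 0, and let M ∈ Matrix (Fin 2) (Fin 2) ℂ with trace M = 1, det M = 0, and M·A = A·M. Then there exists s ∈ ℂ with s² = −det A and M = (1/2) • (1 : Matrix (Fin 2) (Fin 2) ℂ) + (1/(2s)) • A. -/

import Mathlib

/-- A trace-one, determinant-zero 2×2 matrix commuting with a traceless invertible
matrix `A` is `½ I + A/(2s)` with `s² = −det A`. -/
theorem M0_explicit_form
    (A M : Matrix (Fin 2) (Fin 2) ℂ)
    (hA : A.trace = 0) (hdet : A.det ≠ 0)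
    (hM : M.trace = 1) (hMdet : M.det = 0)
    (hcomm : M * A = A * M) :
    ∃ s : ℂ, s ^ 2 = -A.det ∧
      M = (1/2 : ℂ) • (1 : Matrix (Fin 2) (Fin 2) ℂ) + (1/(2*s)) • A := by
  have e00 := congr_fun (congr_fun hcomm 0) 0
  have e01 := congr_fun (congr_fun hcomm 0) 1
  have e10 := congr_fun (congr_fun hcomm 1) 0
  simp only [Matrix.mul_apply, Fin.sum_univ_two] at e00 e01 e10
  rw [Matrix.trace_fin_two] at hA hM
  rw [Matrix.det_fin_two] at hdet hMdet
  rw [Matrix.det_fin_two]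
  set a := A 0 0 with ha
  set b := A 0 1 with hb
  set c := A 1 0 with hc
  set d := A 1 1 with hd
  set m := M 0 0 with hm
  set n := M 0 1 with hn
  set p := M 1 0 with hp
  set q := M 1 1 with hq
  have hd' : d = -a := by linear_combination hA
  have hq' : q = 1 - m := by linear_combination hM
  by_cases hA0 : a = 0
  · -- a = 0, so b ≠ 0
    have hb0 : b ≠ 0 := by
      intro h; exact hdet (by rw [hA0, h]; ring)
    have hbm : b * (2*m - 1) = 0 := by
      linear_combination e01 + b*hM - n*hA + 2*n*hA0
    have hm5 : m = 1/2 := by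
      rcases mul_eq_zero.mp hbm with h | h
      · exact absurd h hb0
      · linear_combination h/2
    have hn0 : n ≠ 0 := by
      intro h
      have : (1:ℂ)/4 = 0 := by
        linear_combination (m - 1/2)*hm5 + hMdet - m*hq' + p*h
      norm_num at this
    have hnp : n * p = 1/4 := by
      linear_combination -hMdet + m*hq' - (m - 1/2)*hm5
    have key : b = 4*n^2*c := by
      linear_combination (-4*n)*e00 - 4*b*hnp
    refine ⟨b/(2*n), ?_, ?_⟩
    · field_simp
      linear_combination b*key + 4*n^2*d*hA0
    · have hinv : (1:ℂ)/(2*(b/(2*n))) = n/b := by field_simp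
      rw [← Matrix.ext_iff, Fin.forall_fin_two]
      constructor <;> rw [Fin.forall_fin_two] <;> constructor <;>
        simp only [hinv, Matrix.add_apply, Matrix.smul_apply, Matrix.one_apply_eq,
          Matrix.one_apply_ne, smul_eq_mul, Fin.isValue, ne_eq, Fin.zero_eq_one_iff,
          Fin.one_eq_zero_iff, OfNat.ofNat_ne_one, not_false_eq_true, one_ne_zero,
          mul_zero, add_zero, mul_one] <;>
        simp only [← ha, ← hb, ← hc, ← hd, ← hm, ← hn, ← hp, ← hq]
      · field_simp
        linear_combination 2*b*hm5 - 2*n*hA0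
      · field_simp; ring
      · field_simp
        linear_combination -e00
      · field_simp
        linear_combination 2*b*hq' - 2*b*hm5 - 2*n*hd' + 2*n*hA0
  · -- a ≠ 0
    have f1 : 2*a*n = b*(2*m-1) := by
      linear_combination -e01 + n*hd' - b*hq'
    have f2 : 2*a*p = c*(2*m-1) := by
      linear_combination e10 + p*hd' - c*hq'
    have f3 : a^2 = (2*m-1)^2 * (a^2 + b*c) := by
      linear_combination 4*a^2*hMdet - 4*a^2*m*hq' + 2*a*p*f1 + b*(2*m-1)*f2
    have hu : (2*m - 1) ≠ 0 := by
      intro h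
      have h2 : a^2 = 0 := by linear_combination f3 + (a^2+b*c)*(2*m-1)*h
      exact hA0 (pow_eq_zero_iff two_ne_zero |>.mp h2)
    refine ⟨a/(2*m-1), ?_, ?_⟩
    · field_simp
      linear_combination f3 + a*(2*m-1)^2*hd'
    · have hinv : (1:ℂ)/(2*(a/(2*m-1))) = (2*m-1)/(2*a) := by field_simp
      rw [← Matrix.ext_iff, Fin.forall_fin_two]
      constructor <;> rw [Fin.forall_fin_two] <;> constructor <;>
        simp only [hinv, Matrix.add_apply, Matrix.smul_apply, Matrix.one_apply_eq,
          Matrix.one_apply_ne, smul_eq_mul, Fin.isValue, ne_eq, Fin.zero_eq_one_iff,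
          Fin.one_eq_zero_iff, OfNat.ofNat_ne_one, not_false_eq_true, one_ne_zero,
          mul_zero, add_zero, mul_one] <;>
        simp only [← ha, ← hb, ← hc, ← hd, ← hm, ← hn, ← hp, ← hq]
      · field_simp; ring
      · field_simp
        linear_combination f1
      · field_simp
        linear_combination f2
      · field_simp
        linear_combination 2*a*hq' + (1-2*m)*hd'
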